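/- The cross-correlation coefficients C_{jp}^k vanish for all odd k: if k is odd then C_{jp}^k = 0, and moreover C_{jp}^k = (−1)^j (1 + (−1)^k) Σ_{m=0}^{j} Σ_{q=0}^{p} ((k+2+j+p)! / (k+2+j+p+m+q)!) B_m^j B_q^p. -/
import Mathlib


open Finset

/-- The recurrence satisfied by both coefficient families `A_m^j` and `B_m^j`
(indexing: `X j m` means `X_m^j`). -/
def CoeffRec (X : ℕ → ℕ → ℝ) : Prop :=
  ∀ j : ℕ, 1 ≤ j →
    (X (j+1) 0 = Real.sqrt ((2*(j:ℝ)+3)/(2*(j:ℝ)-1)) * X (j-1) 0) ∧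
    (∀ m : ℕ, 1 ≤ m → m ≤ j - 1 →
      X (j+1) m = Real.sqrt ((2*(j:ℝ)+3)/(2*(j:ℝ)-1)) * X (j-1) m
        - 2 * Real.sqrt ((2*(j:ℝ)+1)*(2*(j:ℝ)+3)) * X j (m-1)) ∧
    (X (j+1) j = -(2 * Real.sqrt ((2*(j:ℝ)+1)*(2*(j:ℝ)+3))) * X j (j-1)) ∧
    (X (j+1) (j+1) = -(2 * Real.sqrt ((2*(j:ℝ)+1)*(2*(j:ℝ)+3))) * X j j)

/-- The cross-correlation coefficients `C_{jp}^k` built from the families `A`, `B`. -/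
noncomputable def crossC (A B : ℕ → ℕ → ℝ) (j p k : ℕ) : ℝ :=
  ∑ m ∈ Finset.range (j+1), ∑ q ∈ Finset.range (p+1),
    (-1:ℝ)^(m+1) * (((k+2+j+p).factorial : ℝ) / ((k+2+j+p+m+q).factorial : ℝ)) *
      (A j m * B p q + (-1:ℝ)^(k+j+p+m+q) * B j m * A p q)

private lemma negpow (a b : ℕ) (h : a % 2 = b % 2) : (-1:ℝ)^a = (-1:ℝ)^b := by
  rcases Nat.even_or_odd a with ha | ha
  · rw [ha.neg_one_pow, Even.neg_one_pow (Nat.even_iff.mpr (by rw [Nat.even_iff] at ha; omega))]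
  · rw [ha.neg_one_pow, Odd.neg_one_pow (Nat.odd_iff.mpr (by rw [Nat.odd_iff] at ha; omega))]

theorem crossC_odd_vanish_and_formula (A B : ℕ → ℕ → ℝ)
    (hA0 : A 0 0 = -1) (hB0 : B 0 0 = 1)
    (hA10 : A 1 0 = Real.sqrt 3) (hA11 : A 1 1 = 2 * Real.sqrt 3)
    (hB10 : B 1 0 = Real.sqrt 3) (hB11 : B 1 1 = -(2 * Real.sqrt 3))
    (hArec : CoeffRec A) (hBrec : CoeffRec B) :
    ∀ j p k : ℕ,
      (Odd k → crossC A B j p k = 0) ∧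
      crossC A B j p k
        = (-1:ℝ)^j * (1 + (-1:ℝ)^k) *
            ∑ m ∈ Finset.range (j+1), ∑ q ∈ Finset.range (p+1),
              (((k+2+j+p).factorial : ℝ) / ((k+2+j+p+m+q).factorial : ℝ)) *
                B j m * B p q := by
  -- The key symmetry: A j m = (-1)^(j+m+1) B j m for m ≤ j.
  have sym : ∀ j, ∀ m ≤ j, A j m = (-1:ℝ)^(j+m+1) * B j m := by
    intro j
    induction j using Nat.twoStepInduction with
    | zero =>
      intro m hm
      interval_cases m
      simp [hA0, hB0]
    | one =>
      intro m hm
      interval_cases m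
      · rw [hA10, hB10]; norm_num
      · rw [hA11, hB11]; norm_num
    | more j ihj ihj1 =>
      intro m hm
      obtain ⟨h1, h2, h3, h4⟩ := hArec (j+1) (by omega)
      obtain ⟨g1, g2, g3, g4⟩ := hBrec (j+1) (by omega)
      simp only [Nat.add_sub_cancel] at h1 h2 h3 h4 g1 g2 g3 g4
      rcases Nat.lt_or_ge m (j+1) with hlt | hge
      · rcases Nat.eq_zero_or_pos m with rfl | hpos
        · rw [h1, g1, ihj 0 (Nat.zero_le j)]
          rw [negpow (j+2+0+1) (j+0+1) (by omega)]
          ring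
        · obtain ⟨n, rfl⟩ : ∃ n, m = n + 1 := ⟨m - 1, by omega⟩
          have hA' := h2 (n+1) (by omega) (by omega)
          have hB' := g2 (n+1) (by omega) (by omega)
          simp only [Nat.add_sub_cancel] at hA' hB'
          rw [hA', hB', ihj (n+1) (by omega), ihj1 n (by omega)]
          rw [negpow (j+2+(n+1)+1) (j+(n+1)+1) (by omega),
              negpow (j+1+n+1) (j+(n+1)+1) (by omega)]
          ring
      · rcases Nat.eq_or_lt_of_le hge with hmj | hmj
        · subst hmj
          rw [h3, g3, ihj1 j (by omega)]
          rw [negpow (j+1+j+1) 0 (by omega), negpow (j+2+(j+1)+1) 0 (by omega)]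
          ring
        · have hm2 : m = j + 2 := by omega
          subst hm2
          rw [h4, g4, ihj1 (j+1) (le_refl _)]
          rw [negpow (j+1+(j+1)+1) 1 (by omega), negpow (j+2+(j+2)+1) 1 (by omega)]
          ring
  intro j p k
  have key : ∀ m q : ℕ,
      (-1:ℝ)^(m+1) * ((-1:ℝ)^(j+m+1) + (-1:ℝ)^(k+j+p+m+q) * (-1:ℝ)^(p+q+1))
        = (-1:ℝ)^j * (1 + (-1:ℝ)^k) := by
    intro m q
    have e1 : (-1:ℝ)^(m+1) * (-1:ℝ)^(j+m+1) = (-1:ℝ)^j := by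
      rw [← pow_add]; exact negpow _ _ (by omega)
    have e2 : (-1:ℝ)^(m+1) * ((-1:ℝ)^(k+j+p+m+q) * (-1:ℝ)^(p+q+1)) = (-1:ℝ)^(j+k) := by
      rw [← pow_add, ← pow_add]; exact negpow _ _ (by omega)
    rw [mul_add, e1, e2, mul_add, mul_one, pow_add]
  have hform : crossC A B j p k
      = (-1:ℝ)^j * (1 + (-1:ℝ)^k) *
          ∑ m ∈ Finset.range (j+1), ∑ q ∈ Finset.range (p+1),
            (((k+2+j+p).factorial : ℝ) / ((k+2+j+p+m+q).factorial : ℝ)) *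
              B j m * B p q := by
    unfold crossC
    rw [Finset.mul_sum]
    refine Finset.sum_congr rfl fun m hm => ?_
    rw [Finset.mul_sum]
    refine Finset.sum_congr rfl fun q hq => ?_
    rw [sym j m (by simpa using Nat.lt_succ_iff.mp (Finset.mem_range.mp hm)),
        sym p q (by simpa using Nat.lt_succ_iff.mp (Finset.mem_range.mp hq))]
    have := key m q
    linear_combination (((k+2+j+p).factorial : ℝ) / ((k+2+j+p+m+q).factorial : ℝ)
      * B j m * B p q) * this
  refine ⟨fun hk => ?_, hform⟩
  rw [hform, hk.neg_one_pow]
  ring
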